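/- If G is an FC-group (every conjugacy class of G is finite), then every generalized torsion element of G is a torsion element. -/

import Mathlib

/-- `x` is a generalized torsion element: some nonempty finite product of
conjugates of `x` equals `1`. -/
def IsGenTorsion {G : Type*} [Group G] (x : G) : Prop :=
  ∃ l : List G, l ≠ [] ∧ (l.map fun g => g⁻¹ * x * g).prod = 1

/-- The generalized order of `x`: the least `k ≥ 1` such that some product of
`k` conjugates of `x` equals `1` (0 if no such `k` exists). -/
noncomputable def genOrder {G : Type*} [Group G] (x : G) : ℕ :=
  sInf {k | 0 < k ∧ ∃ l : List G, l.length = k ∧ (l.map fun g => g⁻¹ * x * g).prod = 1}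

open scoped commutatorElement

private lemma commutator_mul_central {H : Type*} [Group H] (a b z w : H)
    (hz : z ∈ Subgroup.center H) (hw : w ∈ Subgroup.center H) :
    ⁅a * z, b * w⁆ = ⁅a, b⁆ := by
  have hz' := Subgroup.mem_center_iff.mp hz
  have hw' := Subgroup.mem_center_iff.mp hw
  have hzc : ∀ g : H, z * g * z⁻¹ = g := fun g => by rw [← hz' g, mul_inv_cancel_right]
  have hwc : ∀ g : H, w * g * w⁻¹ = g := fun g => by rw [← hw' g, mul_inv_cancel_right]
  rw [commutatorElement_def, commutatorElement_def, mul_inv_rev, mul_inv_rev]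
  calc a * z * (b * w) * (z⁻¹ * a⁻¹) * (w⁻¹ * b⁻¹)
      = a * (z * (b * w) * z⁻¹) * a⁻¹ * (w⁻¹ * b⁻¹) := by group
    _ = a * (b * w) * a⁻¹ * (w⁻¹ * b⁻¹) := by rw [hzc]
    _ = a * b * (w * a⁻¹ * w⁻¹) * b⁻¹ := by group
    _ = a * b * a⁻¹ * b⁻¹ := by rw [hwc]

private lemma centralizer_finiteIndex {H : Type*} [Group H]
    (hFC : ∀ g : H, {h : H | IsConj g h}.Finite) (g : H) :
    (Subgroup.centralizer ((Subgroup.zpowers g : Subgroup H) : Set H)).FiniteIndex := by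
  have horb : (MulAction.orbit (ConjAct H) g).Finite := by
    have he : MulAction.orbit (ConjAct H) g = {h : H | IsConj g h} := by
      ext h
      rw [Set.mem_setOf_eq, ConjAct.mem_orbit_conjAct, isConj_comm]
    rw [he]; exact hFC g
  have h1 : (Subgroup.centralizer {g}).FiniteIndex := by
    constructor
    rw [Subgroup.centralizer_eq_comap_stabilizer]
    exact ((Subgroup.index_comap_of_surjective (H := MulAction.stabilizer (ConjAct H) g)
      (f := ConjAct.toConjAct.toMonoidHom) ConjAct.toConjAct.surjective).trans
      (MulAction.index_stabilizer _ _)).trans_ne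
      ((Set.ncard_pos horb).mpr ⟨g, MulAction.mem_orbit_self g⟩).ne'
  have hle : Subgroup.centralizer {g} ≤
      Subgroup.centralizer ((Subgroup.zpowers g : Subgroup H) : Set H) := by
    intro h hh
    rw [Subgroup.mem_centralizer_iff] at hh ⊢
    rintro s hs
    obtain ⟨n, rfl⟩ := hs
    show g ^ n * h = h * g ^ n
    exact (Commute.zpow_left (hh g rfl) n).eq
  exact Subgroup.finiteIndex_of_le hle

private lemma key {H : Type*} [Group H] [Group.FG H]
    (hFC : ∀ g : H, {h : H | IsConj g h}.Finite)
    (x : H) (l : List H) (hl : l ≠ [])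
    (hp : (l.map fun g => g⁻¹ * x * g).prod = 1) : IsOfFinOrder x := by
  classical
  obtain ⟨S, hStop, hSfin⟩ := Group.fg_iff.mp ‹Group.FG H›
  haveI : Finite S := hSfin.to_subtype
  haveI hZ : (Subgroup.center H).FiniteIndex := by
    rw [Subgroup.center_eq_infi' hStop]
    exact Subgroup.finiteIndex_iInf fun g => by
      haveI := centralizer_finiteIndex hFC (g : H)
      exact Subgroup.finiteIndex_of_le
        (Subgroup.centralizer_le (Set.singleton_subset_iff.mpr (Subgroup.mem_zpowers _)))
  haveI : Finite (H ⧸ Subgroup.center H) := inferInstance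
  haveI : Finite (commutatorSet H) := by
    have hsub : commutatorSet H ⊆ Set.range
        (fun p : (H ⧸ Subgroup.center H) × (H ⧸ Subgroup.center H) =>
          ⁅Quotient.out p.1, Quotient.out p.2⁆) := by
      rintro c ⟨a, b, rfl⟩
      refine ⟨((a : H ⧸ Subgroup.center H), (b : H ⧸ Subgroup.center H)), ?_⟩
      have ha : a⁻¹ * Quotient.out ((a : H ⧸ Subgroup.center H)) ∈ Subgroup.center H := by
        rw [← QuotientGroup.eq]
        exact (QuotientGroup.out_eq' _).symm
      have hb : b⁻¹ * Quotient.out ((b : H ⧸ Subgroup.center H)) ∈ Subgroup.center H := by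
        rw [← QuotientGroup.eq]
        exact (QuotientGroup.out_eq' _).symm
      show ⁅Quotient.out ((a : H ⧸ Subgroup.center H)),
            Quotient.out ((b : H ⧸ Subgroup.center H))⁆ = ⁅a, b⁆
      calc ⁅Quotient.out ((a : H ⧸ Subgroup.center H)),
            Quotient.out ((b : H ⧸ Subgroup.center H))⁆
          = ⁅a * (a⁻¹ * Quotient.out ((a : H ⧸ Subgroup.center H))),
             b * (b⁻¹ * Quotient.out ((b : H ⧸ Subgroup.center H)))⁆ := by
            rw [mul_inv_cancel_left, mul_inv_cancel_left]
        _ = ⁅a, b⁆ := commutator_mul_central a b _ _ ha hb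
    exact ((Set.finite_range _).subset hsub).to_subtype
  haveI : Finite (commutator H) := inferInstance
  set k := l.length with hk
  have hk0 : k ≠ 0 := fun h => hl (List.length_eq_zero_iff.mp h)
  have hφ : Abelianization.of (x ^ k) = 1 := by
    have h1 := congrArg Abelianization.of hp
    rw [map_one, map_list_prod, List.map_map] at h1
    have heach : (l.map (Abelianization.of ∘ fun g => g⁻¹ * x * g)) =
        List.replicate k (Abelianization.of x) := by
      rw [List.eq_replicate_iff]
      refine ⟨by simp [hk], ?_⟩
      intro b hb
      obtain ⟨g, _, rfl⟩ := List.mem_map.mp hb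
      show Abelianization.of (g⁻¹ * x * g) = Abelianization.of x
      rw [map_mul, map_mul, map_inv, mul_comm, ← mul_assoc, mul_inv_cancel, one_mul]
    rw [heach, List.prod_replicate] at h1
    rw [map_pow]
    exact h1
  have hker : x ^ k ∈ commutator H := (QuotientGroup.eq_one_iff (x ^ k)).mp hφ
  have hfin : IsOfFinOrder ((⟨x ^ k, hker⟩ : commutator H)) := isOfFinOrder_of_finite _
  have hfin2 : IsOfFinOrder (x ^ k) := by
    rw [← orderOf_pos_iff] at hfin ⊢
    rwa [← Subgroup.orderOf_mk (x ^ k) hker]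
  exact hfin2.of_pow hk0

private lemma lift_list {G : Type*} [Group G] (K : Subgroup G) (x : G) (hx : x ∈ K) :
    ∀ l : List G, (∀ g ∈ l, g ∈ K) → ∃ l' : List K, l'.length = l.length ∧
      ((l'.map fun g => g⁻¹ * (⟨x, hx⟩ : K) * g).prod : G) = (l.map fun g => g⁻¹ * x * g).prod
  | [] => fun _ => ⟨[], rfl, rfl⟩
  | (a :: t) => fun h => by
      obtain ⟨t', ht1, ht2⟩ := lift_list K x hx t (fun g hg => h g (List.mem_cons_of_mem a hg))
      refine ⟨⟨a, h a (List.mem_cons_self)⟩ :: t', by simp [ht1], ?_⟩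
      simp only [List.map_cons, List.prod_cons, Subgroup.coe_mul, Subgroup.coe_inv]
      rw [ht2]

theorem stmt9 {G : Type*} [Group G] (hFC : ∀ g : G, {h : G | IsConj g h}.Finite)
    (x : G) (hx : IsGenTorsion x) : IsOfFinOrder x := by
  obtain ⟨l, hl, hp⟩ := hx
  set S : Set G := insert x {a | a ∈ l} with hS
  have hSfin : S.Finite := Set.Finite.insert x l.finite_toSet
  set K : Subgroup G := Subgroup.closure S with hK
  haveI : Finite S := hSfin.to_subtype
  haveI : Group.FG K := Group.closure_finite_fg S
  have hxK : x ∈ K := Subgroup.subset_closure (Set.mem_insert x _)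
  have hFCK : ∀ g : K, {h : K | IsConj g h}.Finite := by
    intro g
    have hsub : {h : K | IsConj g h} ⊆ Subtype.val ⁻¹' {h : G | IsConj (g : G) h} := by
      intro h hh
      exact K.subtype.map_isConj hh
    exact Set.Finite.subset ((hFC (g : G)).preimage Subtype.val_injective.injOn) hsub
  have hmem : ∀ g ∈ l, g ∈ K := fun g hg =>
    Subgroup.subset_closure (Set.mem_insert_of_mem _ hg)
  obtain ⟨l', hlen, hprod⟩ := lift_list K x hxK l hmem
  have hl' : l' ≠ [] := by
    intro h
    rw [h] at hlen
    exact hl (List.length_eq_zero_iff.mp hlen.symm)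
  have hp' : (l'.map fun g => g⁻¹ * (⟨x, hxK⟩ : K) * g).prod = 1 := by
    apply Subtype.val_injective
    rw [hprod, hp]
    rfl
  have := key hFCK (⟨x, hxK⟩ : K) l' hl' hp'
  rw [← orderOf_pos_iff] at this ⊢
  rwa [← Subgroup.orderOf_mk x hxK]
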